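/- For any instance I with k slots, n agents and m types: Proph(I) = Σ_{j=1}^m Δ_j · E[min{X_{1j} + ... + X_{nj}, k}], where for each j the random variables X_{1j}, ..., X_{nj} are independent Bernoulli with P(X_{ij} = 1) = G_{ij}; and ExAnte(I) = Σ_{j=1}^m Δ_j · min{Σ_{i=1}^n G_{ij}, k}. -/

import Mathlib

open Finset

/-- `E[min{X_1+...+X_t, k}]` for independent Bernoulli `X_i` (i ∈ {1,...,t}) with success
probabilities `p i`. -/
noncomputable def eMinBer (p : ℕ → ℝ) (t k : ℕ) : ℝ :=
  ∑ S ∈ (Finset.Icc 1 t).powerset,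
    (∏ i ∈ S, p i) * (∏ i ∈ Finset.Icc 1 t \ S, (1 - p i)) * min (S.card : ℝ) (k : ℝ)

/-- Prophet's value on realized valuations `v`: the maximum of `∑_{i∈S} v i` over `S` with
`|S| ≤ k`. -/
noncomputable def prophVal (n k : ℕ) (v : Fin n → ℝ) : ℝ :=
  sSup {s : ℝ | ∃ S : Finset (Fin n), S.card ≤ k ∧ s = ∑ i ∈ S, v i}

/-- Expected prophet value on the instance given by valuations `r` and type probabilities `p`:
the expectation over the (independent) type realizations `t i ∈ {1,...,m}` of the prophet's
value. -/
noncomputable def Proph (k n m : ℕ) (r : ℕ → ℝ) (p : ℕ → ℕ → ℝ) : ℝ :=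
  ∑ t ∈ Fintype.piFinset (fun _ : Fin n => Finset.Icc 1 m),
    (∏ i : Fin n, p (i.1+1) (t i)) * prophVal n k (fun i => r (t i))

/-- The ex-ante relaxation of the instance given by valuations `r` and probabilities `p`. -/
noncomputable def ExAnte (k n m : ℕ) (r : ℕ → ℝ) (p : ℕ → ℕ → ℝ) : ℝ :=
  sSup {s : ℝ | ∃ a : ℕ → ℝ,
    (∀ j ∈ Finset.Icc 1 m, 0 ≤ a j ∧ a j ≤ ∑ i ∈ Finset.Icc 1 n, p i j) ∧
    (∑ j ∈ Finset.Icc 1 m, a j ≤ (k : ℝ)) ∧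
    s = ∑ j ∈ Finset.Icc 1 m, r j * a j}

lemma rank_card (k : ℕ) (F : Finset ℕ) :
    (F.filter fun x => (F.filter (· < x)).card < k).card = min F.card k := by
  induction F using Finset.strongInduction with
  | _ F ih =>
    rcases F.eq_empty_or_nonempty with rfl | hF
    · simp
    by_cases hck : F.card ≤ k
    · rw [Finset.filter_true_of_mem, min_eq_left hck]
      intro x hx
      have h1 : (F.filter (· < x)).card ≤ (F.erase x).card := by
        apply card_le_card
        intro y hy
        rw [mem_filter] at hy
        exact mem_erase.2 ⟨ne_of_lt hy.2, hy.1⟩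
      have h2 : (F.erase x).card < F.card := card_erase_lt_of_mem hx
      omega
    · set M := F.max' hF with hMdef
      have hM : M ∈ F := F.max'_mem hF
      have hFM : F.filter (· < M) = F.erase M := by
        ext x
        simp only [mem_filter, mem_erase]
        constructor
        · rintro ⟨hx, hlt⟩; exact ⟨ne_of_lt hlt, hx⟩
        · rintro ⟨hne, hx⟩; exact ⟨hx, lt_of_le_of_ne (F.le_max' x hx) hne⟩
      have hcard : (F.erase M).card = F.card - 1 := card_erase_of_mem hM
      have hrk : ∀ x ∈ F.erase M, (F.erase M).filter (· < x) = F.filter (· < x) := by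
        intro x hx
        rw [filter_erase, erase_eq_of_notMem]
        simp only [mem_filter, not_and, not_lt]
        intro _
        exact F.le_max' x (mem_of_mem_erase hx)
      have hMnot : ¬ ((F.filter (· < M)).card < k) := by rw [hFM, hcard]; omega
      have hstep : (F.filter fun x => (F.filter (· < x)).card < k)
          = (F.erase M).filter fun x => ((F.erase M).filter (· < x)).card < k := by
        ext x
        simp only [mem_filter, mem_erase]
        constructor
        · rintro ⟨hx, hr⟩
          have hne : x ≠ M := by rintro rfl; exact hMnot hr
          have hx' : x ∈ F.erase M := mem_erase.2 ⟨hne, hx⟩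
          exact ⟨⟨hne, hx⟩, by rw [hrk x hx']; exact hr⟩
        · rintro ⟨⟨hne, hx⟩, hr⟩
          rw [hrk x (mem_erase.2 ⟨hne, hx⟩)] at hr
          exact ⟨hx, hr⟩
      rw [hstep, ih (F.erase M) (erase_ssubset hM), hcard]
      have : 1 ≤ F.card := card_pos.2 hF
      omega

lemma exists_opt (n k m : ℕ) (t : Fin n → ℕ) (ht : ∀ i, t i ≤ m) :
    ∃ S : Finset (Fin n), S.card ≤ k ∧
      ∀ j, (S.filter fun i => t i ≤ j).card = min ((univ.filter fun i => t i ≤ j)).card k := by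
  classical
  set key : Fin n → ℕ := fun i => t i * n + i.1 with hkey
  have keyinj : Function.Injective key := by
    intro i i' h
    have h1 : key i % n = i.1 := by
      rw [show key i = n * t i + i.1 by rw [Nat.mul_comm]]
      exact (Nat.mul_add_mod n (t i) i.1).trans (Nat.mod_eq_of_lt i.2)
    have h2 : key i' % n = i'.1 := by
      rw [show key i' = n * t i' + i'.1 by rw [Nat.mul_comm]]
      exact (Nat.mul_add_mod n (t i') i'.1).trans (Nat.mod_eq_of_lt i'.2)
    exact Fin.ext (by rw [← h1, ← h2, h])
  have hlt : ∀ (i : Fin n) (j : ℕ), t i ≤ j ↔ key i < (j+1)*n := by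
    intro i j
    constructor
    · intro h
      calc key i = t i * n + i.1 := rfl
        _ < t i * n + n := by omega
        _ = (t i + 1) * n := by ring
        _ ≤ (j+1)*n := Nat.mul_le_mul_right n (by omega)
    · intro h
      have : t i * n < (j+1)*n := by
        have : key i = t i * n + i.1 := rfl
        omega
      have := Nat.lt_of_mul_lt_mul_right this
      omega
  set K : Finset ℕ := univ.image key with hK
  set S : Finset (Fin n) := univ.filter (fun i => (K.filter (· < key i)).card < k) with hS
  have main : ∀ j, (S.filter fun i => t i ≤ j).card = min ((univ.filter fun i => t i ≤ j)).card k := by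
    intro j
    set Kj : Finset ℕ := K.filter (· < (j+1)*n) with hKj
    have hrank : ∀ x ∈ Kj, Kj.filter (· < x) = K.filter (· < x) := by
      intro x hx
      rw [mem_filter] at hx
      ext y
      simp only [hKj, mem_filter]
      constructor
      · rintro ⟨⟨hy, _⟩, hyx⟩; exact ⟨hy, hyx⟩
      · rintro ⟨hy, hyx⟩; exact ⟨⟨hy, by omega⟩, hyx⟩
    have himg : (S.filter fun i => t i ≤ j).image key
        = Kj.filter fun x => (Kj.filter (· < x)).card < k := by
      ext x
      simp only [mem_image, mem_filter, hS, mem_univ, true_and, hKj, hK]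
      constructor
      · rintro ⟨i, ⟨hrk, htj⟩, rfl⟩
        have hmemKj : key i ∈ Kj := by
          simp only [hKj, mem_filter, hK, mem_image]
          exact ⟨⟨i, mem_univ i, rfl⟩, (hlt i j).1 htj⟩
        refine ⟨⟨⟨i, rfl⟩, (hlt i j).1 htj⟩, ?_⟩
        rw [show (Finset.filter (fun x => x < (j+1)*n) (univ.image key)) = Kj from rfl] at *
        rw [hrank _ hmemKj]
        exact hrk
      · rintro ⟨⟨⟨i, _, rfl⟩, hxlt⟩, hr⟩
        have hmemKj : key i ∈ Kj := by
          simp only [hKj, mem_filter, hK, mem_image]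
          exact ⟨⟨i, mem_univ i, rfl⟩, hxlt⟩
        rw [show (Finset.filter (fun x => x < (j+1)*n) (univ.image key)) = Kj from rfl] at hr
        rw [hrank _ hmemKj] at hr
        exact ⟨i, ⟨hr, (hlt i j).2 hxlt⟩, rfl⟩
    have hcard1 : (S.filter fun i => t i ≤ j).card
        = (Kj.filter fun x => (Kj.filter (· < x)).card < k).card := by
      rw [← himg, card_image_of_injective _ keyinj]
    have himg2 : (univ.filter fun i => t i ≤ j).image key = Kj := by
      ext x
      simp only [mem_image, mem_filter, mem_univ, true_and, hKj, hK, mem_image]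
      constructor
      · rintro ⟨i, htj, rfl⟩
        exact ⟨⟨i, rfl⟩, (hlt i j).1 htj⟩
      · rintro ⟨⟨i, rfl⟩, hxlt⟩
        exact ⟨i, (hlt i j).2 hxlt, rfl⟩
    have hcard2 : (univ.filter fun i => t i ≤ j).card = Kj.card := by
      rw [← himg2, card_image_of_injective _ keyinj]
    rw [hcard1, rank_card, hcard2]
  refine ⟨S, ?_, main⟩
  have := main m
  rw [filter_true_of_mem (fun i _ => ht i), filter_true_of_mem (fun i _ => ht i)] at this
  omega

lemma teles (m : ℕ) (r : ℕ → ℝ) :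
    ∀ a, 1 ≤ a → a ≤ m → r a = ∑ j ∈ Icc a m, (r j - (if j < m then r (j+1) else 0)) := by
  suffices h : ∀ d a, 1 ≤ a → a + d = m →
      r a = ∑ j ∈ Icc a m, (r j - (if j < m then r (j+1) else 0)) by
    intro a h1 h2; exact h (m - a) a h1 (by omega)
  intro d
  induction d with
  | zero =>
    intro a h1 h2
    have : a = m := by omega
    subst this
    rw [Finset.Icc_self, Finset.sum_singleton, if_neg (lt_irrefl a)]
    ring
  | succ d ih =>
    intro a h1 h2
    have ham : a < m := by omega
    have hins : Icc a m = insert a (Icc (a+1) m) := by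
      ext x; simp only [mem_Icc, mem_insert]; omega
    rw [hins, Finset.sum_insert (by simp only [mem_Icc]; omega),
      ← ih (a+1) (by omega) (by omega), if_pos ham]
    ring

lemma abel (m : ℕ) (r : ℕ → ℝ) (a : ℕ → ℝ) :
    ∑ j ∈ Icc 1 m, r j * a j
      = ∑ j ∈ Icc 1 m, (r j - (if j < m then r (j+1) else 0)) * ∑ j' ∈ Icc 1 j, a j' := by
  have h1 : ∀ j ∈ Icc 1 m, (r j - (if j < m then r (j+1) else 0)) * ∑ j' ∈ Icc 1 j, a j'
      = ∑ j' ∈ Icc 1 m, if j' ≤ j then (r j - (if j < m then r (j+1) else 0)) * a j' else 0 := by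
    intro j hj
    rw [mem_Icc] at hj
    rw [mul_sum, ← sum_filter]
    congr 1
    ext x
    simp only [mem_Icc, mem_filter]
    omega
  rw [sum_congr rfl h1, Finset.sum_comm]
  refine sum_congr rfl fun j' hj' => ?_
  rw [mem_Icc] at hj'
  rw [← sum_filter]
  have h2 : (Icc 1 m).filter (fun j => j' ≤ j) = Icc j' m := by
    ext x; simp only [mem_Icc, mem_filter]; omega
  rw [h2, ← sum_mul, ← teles m r j' hj'.1 hj'.2]

lemma sum_layer (n m : ℕ) (r : ℕ → ℝ) (t : Fin n → ℕ) (ht : ∀ i, t i ∈ Icc 1 m)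
    (S : Finset (Fin n)) :
    ∑ i ∈ S, r (t i)
      = ∑ j ∈ Icc 1 m, (r j - (if j < m then r (j+1) else 0))
          * ((S.filter fun i => t i ≤ j).card : ℝ) := by
  have step1 : ∀ i ∈ S, r (t i)
      = ∑ j ∈ Icc 1 m, if t i ≤ j then (r j - (if j < m then r (j+1) else 0)) else 0 := by
    intro i _
    have h := ht i
    rw [mem_Icc] at h
    rw [teles m r (t i) h.1 h.2, ← sum_filter]
    congr 1
    ext x
    simp only [mem_Icc, mem_filter]
    omega
  rw [sum_congr rfl step1, Finset.sum_comm]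
  refine sum_congr rfl fun j _ => ?_
  rw [← sum_filter, sum_const, nsmul_eq_mul, mul_comm]

lemma prophVal_eq (k n m : ℕ) (hm : 1 ≤ m) (r : ℕ → ℝ)
    (hr : ∀ j, 1 ≤ j → j < m → r (j+1) ≤ r j) (hrm : 0 ≤ r m)
    (t : Fin n → ℕ) (ht : ∀ i, t i ∈ Icc 1 m) :
    prophVal n k (fun i => r (t i))
      = ∑ j ∈ Icc 1 m, (r j - (if j < m then r (j+1) else 0))
          * min (((univ.filter fun i => t i ≤ j)).card : ℝ) (k : ℝ) := by
  have hD : ∀ j ∈ Icc 1 m, (0:ℝ) ≤ r j - (if j < m then r (j+1) else 0) := by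
    intro j hj
    rw [mem_Icc] at hj
    by_cases h : j < m
    · rw [if_pos h]
      have := hr j hj.1 h
      linarith
    · rw [if_neg h]
      have : j = m := by omega
      subst this
      simpa using hrm
  obtain ⟨S₀, hS₀k, hS₀⟩ := exists_opt n k m t (fun i => (mem_Icc.1 (ht i)).2)
  have hub : ∀ s ∈ {s : ℝ | ∃ S : Finset (Fin n), S.card ≤ k ∧ s = ∑ i ∈ S, r (t i)},
      s ≤ ∑ j ∈ Icc 1 m, (r j - (if j < m then r (j+1) else 0))
          * min (((univ.filter fun i => t i ≤ j)).card : ℝ) (k : ℝ) := by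
    rintro s ⟨S, hSk, rfl⟩
    rw [sum_layer n m r t ht S]
    refine sum_le_sum fun j hj => ?_
    refine mul_le_mul_of_nonneg_left ?_ (hD j hj)
    refine le_min ?_ ?_
    · exact_mod_cast Nat.cast_le.2 (card_le_card (filter_subset_filter _ (subset_univ S)))
    · calc ((S.filter fun i => t i ≤ j).card : ℝ) ≤ (S.card : ℝ) := by
            exact_mod_cast card_filter_le S _
        _ ≤ (k : ℝ) := by exact_mod_cast hSk
  have hmem : (∑ j ∈ Icc 1 m, (r j - (if j < m then r (j+1) else 0))
          * min (((univ.filter fun i => t i ≤ j)).card : ℝ) (k : ℝ))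
      ∈ {s : ℝ | ∃ S : Finset (Fin n), S.card ≤ k ∧ s = ∑ i ∈ S, r (t i)} := by
    refine ⟨S₀, hS₀k, ?_⟩
    rw [sum_layer n m r t ht S₀]
    refine sum_congr rfl fun j _ => ?_
    rw [hS₀ j]
    push_cast [Nat.cast_min]
    rfl
  exact IsGreatest.csSup_eq ⟨hmem, hub⟩

lemma eMinBer_eq (n m j k : ℕ) (hj1 : 1 ≤ j) (hjm : j ≤ m) (p : ℕ → ℕ → ℝ)
    (hps : ∀ i ∈ Icc 1 n, ∑ j' ∈ Icc 1 m, p i j' = 1) :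
    eMinBer (fun i => ∑ j' ∈ Icc 1 j, p i j') n k
      = ∑ t ∈ Fintype.piFinset (fun _ : Fin n => Icc 1 m),
          (∏ i : Fin n, p (i.1+1) (t i))
            * min (((univ.filter fun i => t i ≤ j)).card : ℝ) (k : ℝ) := by
  classical
  set q : ℕ → ℝ := fun x => ∑ j' ∈ Icc 1 j, p x j' with hq
  have hinj : Function.Injective (fun i : Fin n => i.1 + 1) := fun i i' h => Fin.ext (by simpa using h)
  set emb : Fin n ↪ ℕ := ⟨fun i => i.1 + 1, hinj⟩ with hemb
  have hIccmap : Icc 1 n = univ.map emb := by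
    ext x
    simp only [mem_Icc, mem_map, mem_univ, true_and, hemb, Function.Embedding.coeFn_mk]
    constructor
    · rintro ⟨h1, h2⟩; exact ⟨⟨x - 1, by omega⟩, by simp; omega⟩
    · rintro ⟨i, rfl⟩; exact ⟨by omega, by omega⟩
  have hmapsdiff : ∀ (B : Finset (Fin n)), (univ.map emb) \ (B.map emb) = (univ \ B).map emb := by
    intro B
    ext x
    simp only [mem_sdiff, mem_map, mem_univ, true_and]
    constructor
    · rintro ⟨⟨a, rfl⟩, h2⟩
      exact ⟨a, fun hb => h2 ⟨a, hb, rfl⟩, rfl⟩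
    · rintro ⟨a, ha, rfl⟩
      refine ⟨⟨a, rfl⟩, ?_⟩
      rintro ⟨a', ha', he⟩
      exact ha (by rwa [← emb.injective he])
  -- step 1: reindex
  have hre : eMinBer q n k
      = ∑ T ∈ (univ : Finset (Finset (Fin n))),
          (∏ i ∈ T, q (i.1+1)) * (∏ i ∈ univ \ T, (1 - q (i.1+1))) * min (T.card : ℝ) (k:ℝ) := by
    rw [eMinBer, eq_comm]
    refine Finset.sum_nbij' (fun T => T.map emb) (fun S => univ.filter fun a => (a.1+1:ℕ) ∈ S)
      ?_ ?_ ?_ ?_ ?_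
    · intro T _
      rw [mem_powerset, hIccmap]
      exact map_subset_map.2 (subset_univ T)
    · intro S _
      exact mem_univ _
    · intro T _
      ext a
      simp only [mem_filter, mem_univ, true_and, mem_map, hemb, Function.Embedding.coeFn_mk]
      constructor
      · rintro ⟨a', ha', he⟩
        have : a' = a := Fin.ext (by omega)
        rwa [← this]
      · intro ha; exact ⟨a, ha, rfl⟩
    · intro S hS
      rw [mem_powerset] at hS
      ext x
      simp only [mem_map, mem_filter, mem_univ, true_and, hemb, Function.Embedding.coeFn_mk]
      constructor
      · rintro ⟨a, ha, rfl⟩; exact ha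
      · intro hx
        have hx' := hS hx
        rw [mem_Icc] at hx'
        exact ⟨⟨x - 1, by omega⟩, by simpa using (by omega : x - 1 + 1 = x) ▸ hx, by simp; omega⟩
    · intro T _
      rw [Finset.prod_map, Finset.card_map, hIccmap, hmapsdiff, Finset.prod_map]
      rfl
  rw [hre]
  -- step 2: expand each product over patterns
  have hsplit : ∀ i : Fin n, 1 - q (i.1+1) = ∑ j' ∈ Ioc j m, p (i.1+1) j' := by
    intro i
    have hmem : (i.1+1) ∈ Icc 1 n := mem_Icc.2 ⟨by omega, by omega⟩
    have h := hps (i.1+1) hmem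
    have hu : Icc 1 m = Icc 1 j ∪ Ioc j m := by
      ext x; simp only [mem_union, mem_Icc, mem_Ioc]; omega
    have hd : Disjoint (Icc 1 j) (Ioc j m) := by
      rw [Finset.disjoint_left]
      intro x hx hx'
      rw [mem_Icc] at hx; rw [mem_Ioc] at hx'; omega
    rw [hu, Finset.sum_union hd] at h
    have : q (i.1+1) = ∑ j' ∈ Icc 1 j, p (i.1+1) j' := rfl
    linarith
  have hC : ∀ T : Finset (Fin n),
      (∏ i ∈ T, q (i.1+1)) * (∏ i ∈ univ \ T, (1 - q (i.1+1)))
        = ∑ t ∈ Fintype.piFinset (fun i => if i ∈ T then Icc 1 j else Ioc j m),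
            ∏ i : Fin n, p (i.1+1) (t i) := by
    intro T
    rw [← Finset.prod_univ_sum]
    rw [← Finset.prod_sdiff (subset_univ T), mul_comm]
    refine congrArg₂ (· * ·) ?_ ?_
    · refine Finset.prod_congr rfl fun i hi => ?_
      rw [mem_sdiff] at hi
      rw [if_neg hi.2]
      exact hsplit i
    · refine Finset.prod_congr rfl fun i hi => ?_
      rw [if_pos hi]
  -- step 3: fiberwise decomposition of the RHS
  set pat : (Fin n → ℕ) → Finset (Fin n) := fun t => univ.filter (fun i => t i ≤ j) with hpat
  rw [← Finset.sum_fiberwise (Fintype.piFinset (fun _ : Fin n => Icc 1 m)) pat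
    (fun t => (∏ i : Fin n, p (i.1+1) (t i)) * min (((pat t).card : ℝ)) (k:ℝ))]
  refine Finset.sum_congr rfl fun T _ => ?_
  have hfib : (Fintype.piFinset (fun _ : Fin n => Icc 1 m)).filter (fun t => pat t = T)
      = Fintype.piFinset (fun i => if i ∈ T then Icc 1 j else Ioc j m) := by
    ext t
    simp only [mem_filter, Fintype.mem_piFinset, mem_Icc, hpat, Finset.ext_iff, mem_univ,
      true_and, Finset.mem_filter]
    constructor
    · rintro ⟨hall, hpt⟩ i
      by_cases hiT : i ∈ T
      · rw [if_pos hiT]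
        exact mem_Icc.2 ⟨(hall i).1, (hpt i).2 hiT⟩
      · rw [if_neg hiT]
        have : ¬ t i ≤ j := fun h => hiT ((hpt i).1 h)
        exact mem_Ioc.2 ⟨by omega, (hall i).2⟩
    · intro hall
      constructor
      · intro i
        have := hall i
        by_cases hiT : i ∈ T
        · rw [if_pos hiT, mem_Icc] at this; omega
        · rw [if_neg hiT, mem_Ioc] at this; omega
      · intro i
        have := hall i
        by_cases hiT : i ∈ T
        · rw [if_pos hiT, mem_Icc] at this
          exact ⟨fun _ => hiT, fun _ => this.2⟩
        · rw [if_neg hiT, mem_Ioc] at this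
          exact ⟨fun h => absurd h (by omega), fun h => absurd h hiT⟩
  rw [hC T, Finset.sum_mul, ← hfib]
  refine Finset.sum_congr rfl fun t ht => ?_
  rw [(mem_filter.1 ht).2]

lemma exante_eq (k n m : ℕ) (hm : 1 ≤ m) (r : ℕ → ℝ) (p : ℕ → ℕ → ℝ)
    (hr : ∀ j, 1 ≤ j → j < m → r (j+1) ≤ r j) (hrm : 0 ≤ r m)
    (hp : ∀ i ∈ Finset.Icc 1 n, ∀ j ∈ Finset.Icc 1 m, 0 ≤ p i j) :
    ExAnte k n m r p
      = ∑ j ∈ Finset.Icc 1 m, (r j - (if j < m then r (j+1) else 0)) *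
          min (∑ i ∈ Finset.Icc 1 n, ∑ j' ∈ Finset.Icc 1 j, p i j') (k : ℝ) := by
  classical
  have hD : ∀ j ∈ Icc 1 m, (0:ℝ) ≤ r j - (if j < m then r (j+1) else 0) := by
    intro j hj
    rw [mem_Icc] at hj
    by_cases h : j < m
    · rw [if_pos h]; have := hr j hj.1 h; linarith
    · rw [if_neg h]
      have : j = m := by omega
      subst this; simpa using hrm
  set Sm : ℕ → ℝ := fun j => ∑ i ∈ Icc 1 n, ∑ j' ∈ Icc 1 j, p i j' with hSm
  set M : ℕ → ℝ := fun j => min (Sm j) (k:ℝ) with hM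
  have hSm0 : Sm 0 = 0 := by simp [hSm]
  have hM0 : M 0 = 0 := by
    rw [hM]; simp only [hSm0]
    exact min_eq_left (by positivity)
  have hdiff : ∀ j, 1 ≤ j → Sm j = Sm (j-1) + ∑ i ∈ Icc 1 n, p i j := by
    intro j hj
    simp only [hSm, ← Finset.sum_add_distrib]
    refine Finset.sum_congr rfl fun i _ => ?_
    have : Icc 1 j = insert j (Icc 1 (j-1)) := by
      ext x; simp only [mem_Icc, mem_insert]; omega
    rw [this, Finset.sum_insert (by simp only [mem_Icc]; omega), add_comm]
  have hpj : ∀ j ∈ Icc 1 m, (0:ℝ) ≤ ∑ i ∈ Icc 1 n, p i j :=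
    fun j hj => Finset.sum_nonneg fun i hi => hp i hi j hj
  have hMmono : ∀ j ∈ Icc 1 m, M (j-1) ≤ M j := by
    intro j hj
    refine min_le_min ?_ le_rfl
    rw [hdiff j (mem_Icc.1 hj).1]
    have := hpj j hj
    linarith
  have htel : ∀ (f : ℕ → ℝ) (b : ℕ), ∑ j ∈ Icc 1 b, (f j - f (j-1)) = f b - f 0 := by
    intro f b
    induction b with
    | zero => simp
    | succ b ih =>
      have hins : Icc 1 (b+1) = insert (b+1) (Icc 1 b) := by
        ext x; simp only [mem_Icc, mem_insert]; omega
      rw [hins, Finset.sum_insert (by simp only [mem_Icc]; omega), ih]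
      simp only [Nat.add_sub_cancel]
      ring
  set a : ℕ → ℝ := fun j => M j - M (j-1) with ha
  have hA : ∀ b, ∑ j' ∈ Icc 1 b, a j' = M b := by
    intro b
    have h0 : ∑ j' ∈ Icc 1 b, a j' = ∑ j' ∈ Icc 1 b, (M j' - M (j'-1)) := rfl
    rw [h0, htel M b, hM0, sub_zero]
  have hval : ∑ j ∈ Icc 1 m, r j * a j
      = ∑ j ∈ Icc 1 m, (r j - (if j < m then r (j+1) else 0)) * M j := by
    rw [abel m r a]
    exact Finset.sum_congr rfl fun j _ => by rw [hA j]
  have hmem : (∑ j ∈ Finset.Icc 1 m, (r j - (if j < m then r (j+1) else 0)) *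
          min (∑ i ∈ Finset.Icc 1 n, ∑ j' ∈ Finset.Icc 1 j, p i j') (k : ℝ))
      ∈ {s : ℝ | ∃ a : ℕ → ℝ,
        (∀ j ∈ Finset.Icc 1 m, 0 ≤ a j ∧ a j ≤ ∑ i ∈ Finset.Icc 1 n, p i j) ∧
        (∑ j ∈ Finset.Icc 1 m, a j ≤ (k : ℝ)) ∧
        s = ∑ j ∈ Finset.Icc 1 m, r j * a j} := by
    refine ⟨a, ?_, ?_, ?_⟩
    · intro j hj
      constructor
      · have h1 := hMmono j hj
        have haj : a j = M j - M (j-1) := rfl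
        rw [haj]; linarith
      · have hj1 := (mem_Icc.1 hj).1
        have hd := hdiff j hj1
        have hd' := hpj j hj
        have haj : a j = min (Sm j) (k:ℝ) - min (Sm (j-1)) (k:ℝ) := rfl
        rw [haj]
        rcases le_total (Sm j) (k:ℝ) with h | h <;>
          rcases le_total (Sm (j-1)) (k:ℝ) with h' | h'
        · rw [min_eq_left h, min_eq_left h']; linarith
        · rw [min_eq_left h, min_eq_right h']; linarith
        · rw [min_eq_right h, min_eq_left h']; linarith
        · rw [min_eq_right h, min_eq_right h']; linarith
    · exact le_trans (le_of_eq (hA m)) (min_le_right _ _)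
    · rw [hval]
  have hub : ∀ s ∈ {s : ℝ | ∃ a : ℕ → ℝ,
        (∀ j ∈ Finset.Icc 1 m, 0 ≤ a j ∧ a j ≤ ∑ i ∈ Finset.Icc 1 n, p i j) ∧
        (∑ j ∈ Finset.Icc 1 m, a j ≤ (k : ℝ)) ∧
        s = ∑ j ∈ Finset.Icc 1 m, r j * a j},
      s ≤ ∑ j ∈ Finset.Icc 1 m, (r j - (if j < m then r (j+1) else 0)) *
          min (∑ i ∈ Finset.Icc 1 n, ∑ j' ∈ Finset.Icc 1 j, p i j') (k : ℝ) := by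
    rintro s ⟨b, hb1, hb2, rfl⟩
    rw [abel m r b]
    refine Finset.sum_le_sum fun j hj => ?_
    refine mul_le_mul_of_nonneg_left ?_ (hD j hj)
    have hjm := (mem_Icc.1 hj).2
    refine le_min ?_ ?_
    · calc ∑ j' ∈ Icc 1 j, b j'
          ≤ ∑ j' ∈ Icc 1 j, ∑ i ∈ Icc 1 n, p i j' := by
            refine Finset.sum_le_sum fun j' hj' => ?_
            have : j' ∈ Icc 1 m := by
              rw [mem_Icc] at hj' ⊢
              exact ⟨hj'.1, le_trans hj'.2 hjm⟩
            exact (hb1 j' this).2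
        _ = ∑ i ∈ Icc 1 n, ∑ j' ∈ Icc 1 j, p i j' := Finset.sum_comm
    · calc ∑ j' ∈ Icc 1 j, b j' ≤ ∑ j' ∈ Icc 1 m, b j' := by
            refine Finset.sum_le_sum_of_subset_of_nonneg
              (Finset.Icc_subset_Icc_right hjm) fun j' hj' _ => (hb1 j' hj').1
        _ ≤ (k:ℝ) := hb2
  exact IsGreatest.csSup_eq ⟨hmem, hub⟩

/-- For any instance,
`Proph(I) = Σ_j Δ_j · E[min{Σ_i Ber(G_{ij}), k}]` and
`ExAnte(I) = Σ_j Δ_j · min{Σ_i G_{ij}, k}`,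
where `G_{ij} = Σ_{j'≤j} p_{ij'}` and `Δ_j = r_j - r_{j+1}` (with `r_{m+1} = 0`). -/
theorem stmt1 (k n m : ℕ) (hk : 1 ≤ k) (hn : 1 ≤ n) (hm : 1 ≤ m)
    (r : ℕ → ℝ) (p : ℕ → ℕ → ℝ)
    (hr : ∀ j, 1 ≤ j → j < m → r (j+1) ≤ r j) (hrm : 0 ≤ r m)
    (hp : ∀ i ∈ Finset.Icc 1 n, ∀ j ∈ Finset.Icc 1 m, 0 ≤ p i j)
    (hps : ∀ i ∈ Finset.Icc 1 n, ∑ j ∈ Finset.Icc 1 m, p i j = 1) :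
    Proph k n m r p =
      ∑ j ∈ Finset.Icc 1 m, (r j - (if j < m then r (j+1) else 0)) *
        eMinBer (fun i => ∑ j' ∈ Finset.Icc 1 j, p i j') n k ∧
    ExAnte k n m r p =
      ∑ j ∈ Finset.Icc 1 m, (r j - (if j < m then r (j+1) else 0)) *
        min (∑ i ∈ Finset.Icc 1 n, ∑ j' ∈ Finset.Icc 1 j, p i j') (k : ℝ) := by
  constructor
  · rw [Proph]
    have h1 : ∀ t ∈ Fintype.piFinset (fun _ : Fin n => Finset.Icc 1 m),
        (∏ i : Fin n, p (i.1+1) (t i)) * prophVal n k (fun i => r (t i))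
          = ∑ j ∈ Finset.Icc 1 m, (r j - (if j < m then r (j+1) else 0)) *
              ((∏ i : Fin n, p (i.1+1) (t i))
                * min (((univ.filter fun i => t i ≤ j)).card : ℝ) (k : ℝ)) := by
      intro t ht
      rw [prophVal_eq k n m hm r hr hrm t (fun i => Fintype.mem_piFinset.1 ht i),
        Finset.mul_sum]
      exact Finset.sum_congr rfl fun j _ => by ring
    rw [Finset.sum_congr rfl h1, Finset.sum_comm]
    refine Finset.sum_congr rfl fun j hj => ?_
    rw [← Finset.mul_sum, eMinBer_eq n m j k (mem_Icc.1 hj).1 (mem_Icc.1 hj).2 p hps]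
  · exact exante_eq k n m hm r p hr hrm hp
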